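/- For every i ∈ ℤ, the shortest dependent path with source i, namely the path (i, a_i + b_i), has grade 2. -/
import Mathlib


/-- Paths of the quiver `ℤ` (arrows `i → i - 1`) are pairs `(source, length)`;
`p` is a subpath of `q` iff the source of `p` is at most that of `q` and the
target of `q` is at most that of `p`. -/
def ZIsSubpath (p q : ℤ × ℕ) : Prop :=
  p.1 ≤ q.1 ∧ q.1 - (q.2 : ℤ) ≤ p.1 - (p.2 : ℤ)

/-- Proper subpath: a subpath that is not the whole path. -/
def ZIsProperSubpath (p q : ℤ × ℕ) : Prop :=
  ZIsSubpath p q ∧ p ≠ q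

/-- A path is factorisable (w.r.t. the factorisable vertices, i.e. the values
of `x`) if both its source and its target are factorisable vertices. -/
def IsFactorisable (x : ℤ → ℤ) (p : ℤ × ℕ) : Prop :=
  (∃ s : ℤ, x s = p.1) ∧ ∃ s : ℤ, x s = p.1 - (p.2 : ℤ)

/-- The grade of the path `(i, ℓ)` is `m i - m (i - ℓ)`, where
`m t = max {s : x s ≤ t}`. -/
def pathGrade (m : ℤ → ℤ) (p : ℤ × ℕ) : ℤ :=
  m p.1 - m (p.1 - (p.2 : ℤ))

/-- **Shortest dependent paths have grade 2.** For every `i`, the path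
`(i, a i + b i)` has grade 2. -/
theorem shortest_dependent_path_grade_two (x m : ℤ → ℤ) (hx : StrictMono x)
    (hm : ∀ t : ℤ, x (m t) ≤ t ∧ ∀ s : ℤ, x s ≤ t → s ≤ m t)
    (N : Set (ℤ × ℕ))
    (hN0 : ∀ i : ℤ, (i, 0) ∈ N)
    (hNdown : ∀ p q : ℤ × ℕ, ZIsSubpath p q → q ∈ N → p ∈ N)
    (hNbdd : ∃ B : ℕ, ∀ p ∈ N, p.2 ≤ B)
    (C : Set (ℤ × ℕ)) (hCN : C ⊆ N)
    (hCanti : ∀ p ∈ C, ∀ q ∈ C, ZIsSubpath p q → p = q)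
    (hCmax : ∀ p ∈ C, ∀ q ∈ N, ZIsSubpath p q → p = q)
    (hC2 : ∀ p : ℤ × ℕ, IsFactorisable x p → pathGrade m p = 2 → p ∈ C)
    (a b : ℤ → ℕ)
    (ha : ∀ i : ℤ, (i, a i) ∈ N ∧ ∀ ℓ : ℕ, (i, ℓ) ∈ N → ℓ ≤ a i)
    (hb : ∀ i : ℤ, (b i = 0 ∧ ∃ ℓ : ℕ, (i, ℓ) ∈ C) ∨ (b i = 1 ∧ ¬ ∃ ℓ : ℕ, (i, ℓ) ∈ C)) :
    ∀ i : ℤ, pathGrade m (i, a i + b i) = 2 := by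
  intro i
  have hxle : ∀ k l : ℤ, k ≤ l → x k ≤ x l := fun k l h => hx.monotone h
  have hmx : ∀ k : ℤ, m (x k) = k := by
    intro k
    have h1 := (hm (x k)).1
    have h2 := (hm (x k)).2 k le_rfl
    have h3 := hx.le_iff_le.mp h1
    omega
  -- the canonical grade-2 factorisable path with source `x k`
  have hPC : ∀ k : ℤ, (x k, (x k - x (k - 2)).toNat) ∈ C := by
    intro k
    have hle : x (k - 2) ≤ x k := hxle _ _ (by omega)
    have htn : (((x k - x (k - 2)).toNat : ℤ)) = x k - x (k - 2) :=
      Int.toNat_of_nonneg (by omega)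
    apply hC2
    · refine ⟨⟨k, rfl⟩, ⟨k - 2, ?_⟩⟩
      simp only [htn]
      ring
    · simp only [pathGrade, htn]
      have heq : x k - (x k - x (k - 2)) = x (k - 2) := by ring
      rw [heq, hmx, hmx]
      ring
  set s := m i with hs
  have hxsi : x s ≤ i := (hm i).1
  have hxs1 : i < x (s + 1) := by
    by_contra h
    push_neg at h
    have := (hm i).2 (s + 1) h
    omega
  have htns : (((x s - x (s - 2)).toNat : ℤ)) = x s - x (s - 2) :=
    Int.toNat_of_nonneg (by have := hxle (s - 2) s (by omega); omega)
  have htns1 : (((x (s + 1) - x (s + 1 - 2)).toNat : ℤ)) = x (s + 1) - x (s - 1) := by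
    have h1 : s + 1 - 2 = s - 1 := by ring
    rw [h1]
    exact Int.toNat_of_nonneg (by have := hxle (s - 1) (s + 1) (by omega); omega)
  -- Claim A : every path in N with source i has grade at most 2
  have claimA : ∀ ℓ : ℕ, (i, ℓ) ∈ N → s - 2 ≤ m (i - (ℓ : ℤ)) := by
    intro ℓ hℓ
    by_contra h
    push_neg at h
    have hlt : i - (ℓ : ℤ) < x (s - 2) := by
      by_contra h2
      push_neg at h2
      have := (hm (i - (ℓ : ℤ))).2 (s - 2) h2
      omega
    have hsub : ZIsSubpath (x s, (x s - x (s - 2)).toNat) (i, ℓ) := by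
      refine ⟨hxsi, ?_⟩
      simp only
      omega
    have heq := hCmax _ (hPC s) _ hℓ hsub
    have h1 : x s = i := congrArg Prod.fst heq
    have h2 : (x s - x (s - 2)).toNat = ℓ := congrArg Prod.snd heq
    omega
  rcases hb i with ⟨hb0, ℓ, hℓC⟩ | ⟨hb1, hnC⟩
  · -- case b i = 0 : some (i, ℓ) ∈ C, show (i, a i) ∈ C and its grade is 2
    have hℓa : ℓ ≤ a i := (ha i).2 ℓ (hCN hℓC)
    have hiaC : (i, a i) ∈ C := by
      have hsub : ZIsSubpath (i, ℓ) (i, a i) := by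
        refine ⟨le_rfl, ?_⟩
        simp only
        omega
      have heq := hCmax _ hℓC _ (ha i).1 hsub
      exact heq ▸ hℓC
    have hup := claimA (a i) (ha i).1
    have hdown : m (i - (a i : ℤ)) ≤ s - 2 := by
      by_contra h
      push_neg at h
      have hx1 : x (s - 1) ≤ i - (a i : ℤ) :=
        le_trans (hxle (s - 1) (m (i - (a i : ℤ))) (by omega)) (hm (i - (a i : ℤ))).1
      have hsub : ZIsSubpath (i, a i) (x (s + 1), (x (s + 1) - x (s + 1 - 2)).toNat) := by
        refine ⟨le_of_lt hxs1, ?_⟩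
        simp only
        omega
      have heq := hCanti _ hiaC _ (hPC (s + 1)) hsub
      have h1 : i = x (s + 1) := congrArg Prod.fst heq
      omega
    have hfin : m (i - (a i : ℤ)) = s - 2 := le_antisymm hdown hup
    have hab : a i + b i = a i := by omega
    rw [hab]
    simp only [pathGrade]
    omega
  · -- case b i = 1 : no element of C has source i
    have hgup : m (i - (a i : ℤ) - 1) ≤ s - 2 := by
      by_contra h
      push_neg at h
      have hx1 : x (s - 1) ≤ i - (a i : ℤ) - 1 :=
        le_trans (hxle (s - 1) (m (i - (a i : ℤ) - 1)) (by omega)) (hm (i - (a i : ℤ) - 1)).1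
      have hsub : ZIsSubpath (i, a i + 1) (x (s + 1), (x (s + 1) - x (s + 1 - 2)).toNat) := by
        refine ⟨le_of_lt hxs1, ?_⟩
        simp only
        push_cast
        omega
      have hmem := hNdown _ _ hsub (hCN (hPC (s + 1)))
      have := (ha i).2 (a i + 1) hmem
      omega
    have hglow : x (s - 2) ≤ i - (a i : ℤ) - 1 := by
      have ht := claimA (a i) (ha i).1
      have hxt : x (m (i - (a i : ℤ))) ≤ i - (a i : ℤ) := (hm (i - (a i : ℤ))).1
      by_contra h
      push_neg at h
      have hle2 : x (s - 2) ≤ i - (a i : ℤ) :=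
        le_trans (hxle (s - 2) (m (i - (a i : ℤ))) (by omega)) hxt
      have heq2 : x (s - 2) = i - (a i : ℤ) := by omega
      have hsub : ZIsSubpath (x s, (x s - x (s - 2)).toNat) (i, a i) := by
        refine ⟨hxsi, ?_⟩
        simp only
        omega
      have hc := hPC s
      rw [hCmax _ (hPC s) _ (ha i).1 hsub] at hc
      exact hnC ⟨a i, hc⟩
    have hlow2 : s - 2 ≤ m (i - (a i : ℤ) - 1) := (hm _).2 _ hglow
    rw [hb1]
    simp only [pathGrade]
    have hcast : i - ((a i + 1 : ℕ) : ℤ) = i - (a i : ℤ) - 1 := by push_cast; ring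
    rw [hcast]
    omega
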